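/- Let (M,g) be a Riemannian manifold and let Is(M,g) be its isometry group with the compact-open topology. Then for every m ∈ M, the evaluation map Is(M,g) → M, α ↦ α(m), is a proper map. -/

import Mathlib

open Metric Set Topology Filter

namespace Stmt11Aux

variable {M : Type*} [MetricSpace M]

/-- pairs (f, g) that come from isometric equivalences moving `m` into `K`,
described by closed-under-pointwise-limits conditions. -/
def goodSet (K : Set M) (m : M) : Set ((M → M) × (M → M)) :=
  {p | Isometry p.1 ∧ p.1 m ∈ K ∧ (∀ y, p.1 (p.2 y) = y) ∧ (∀ y, p.2 (p.1 y) = y)}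

lemma eq_of_forall_dist_lt {a b : M} (h : ∀ ε > 0, dist a b < ε) : a = b := by
  by_contra hne
  exact absurd (h _ (dist_pos.2 hne)) (lt_irrefl _)

lemma isClosed_goodSet {K : Set M} (hK : IsClosed K) (m : M) :
    IsClosed (goodSet K m) := by
  rw [← closure_subset_iff_isClosed]
  rintro ⟨f, g⟩ hfg
  have approx : ∀ ε > 0, ∀ z₁ z₂ w₁ : M, ∃ p ∈ goodSet K m,
      dist (p.1 z₁) (f z₁) < ε ∧ dist (p.1 z₂) (f z₂) < ε ∧
      dist (p.2 w₁) (g w₁) < ε := by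
    intro ε hε z₁ z₂ w₁
    have ho : IsOpen {p : (M → M) × (M → M) |
        dist (p.1 z₁) (f z₁) < ε ∧ dist (p.1 z₂) (f z₂) < ε ∧
        dist (p.2 w₁) (g w₁) < ε} := by
      refine IsOpen.inter ?_ (IsOpen.inter ?_ ?_)
      · exact isOpen_lt (((continuous_apply z₁).comp continuous_fst).dist
          continuous_const) continuous_const
      · exact isOpen_lt (((continuous_apply z₂).comp continuous_fst).dist
          continuous_const) continuous_const
      · exact isOpen_lt (((continuous_apply w₁).comp continuous_snd).dist
          continuous_const) continuous_const
    obtain ⟨p, hp, hpC⟩ := mem_closure_iff.1 hfg _ ho (by simp [hε])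
    exact ⟨p, hpC, hp.1, hp.2.1, hp.2.2⟩
  have hf : Isometry f := by
    refine Isometry.of_dist_eq fun x y => eq_of_forall_dist_lt fun ε hε => ?_
    obtain ⟨p, hp, h1, h2, -⟩ := approx (ε / 2) (by linarith) x y m
    calc dist (dist (f x) (f y)) (dist x y)
        = dist (dist (f x) (f y)) (dist (p.1 x) (p.1 y)) := by rw [hp.1.dist_eq]
      _ ≤ dist (f x) (p.1 x) + dist (f y) (p.1 y) := dist_dist_dist_le _ _ _ _
      _ < ε := by rw [dist_comm (f x), dist_comm (f y)]; linarith
  have hfm : f m ∈ K := by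
    rw [← hK.closure_eq]
    refine Metric.mem_closure_iff.2 fun ε hε => ?_
    obtain ⟨p, hp, h1, -, -⟩ := approx ε hε m m m
    exact ⟨p.1 m, hp.2.1, by rwa [dist_comm]⟩
  have hfg1 : ∀ y, f (g y) = y := by
    intro y
    refine eq_of_forall_dist_lt fun ε hε => ?_
    obtain ⟨p, hp, h1, -, h3⟩ := approx (ε / 2) (by linarith) (g y) (g y) y
    calc dist (f (g y)) y
        ≤ dist (f (g y)) (p.1 (g y)) + dist (p.1 (g y)) (p.1 (p.2 y))
            + dist (p.1 (p.2 y)) y := dist_triangle4 _ _ _ _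
      _ = dist (f (g y)) (p.1 (g y)) + dist (g y) (p.2 y) + 0 := by
            rw [hp.1.dist_eq, hp.2.2.1, dist_self]
      _ < ε := by rw [dist_comm (f (g y)), dist_comm (g y)]; linarith
  have hfg2 : ∀ y, g (f y) = y := by
    intro y
    refine eq_of_forall_dist_lt fun ε hε => ?_
    obtain ⟨p, hp, h1, -, h3⟩ := approx (ε / 2) (by linarith) y y (f y)
    have hpiso2 : Isometry p.2 := by
      refine Isometry.of_dist_eq fun a b => ?_
      rw [← hp.1.dist_eq (p.2 a) (p.2 b), hp.2.2.1, hp.2.2.1]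
    calc dist (g (f y)) y
        ≤ dist (g (f y)) (p.2 (f y)) + dist (p.2 (f y)) (p.2 (p.1 y))
            + dist (p.2 (p.1 y)) y := dist_triangle4 _ _ _ _
      _ = dist (g (f y)) (p.2 (f y)) + dist (f y) (p.1 y) + 0 := by
            rw [hpiso2.dist_eq, hp.2.2.2, dist_self]
      _ < ε := by rw [dist_comm (g (f y)), dist_comm (f y)]; linarith
  exact ⟨hf, hfm, hfg1, hfg2⟩

end Stmt11Aux

open Stmt11Aux

/-- Let `(M,g)` be a Riemannian manifold (viewed as a proper metric space via its
distance function) and let `Is(M,g)` be its isometry group with the compact-open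
topology.  Then for every `m ∈ M`, the evaluation map `Is(M,g) → M`, `α ↦ α(m)`,
is a proper map. -/
theorem stmt_11 {M : Type*} [MetricSpace M] [ProperSpace M] (m : M) :
    @IsProperMap (M ≃ᵢ M) M
      (TopologicalSpace.induced
        (fun α : M ≃ᵢ M => (⟨⇑α, α.continuous⟩ : C(M, M))) inferInstance)
      _
      (fun α : M ≃ᵢ M => α m) := by
  letI : TopologicalSpace (M ≃ᵢ M) :=
    TopologicalSpace.induced
      (fun α : M ≃ᵢ M => (⟨⇑α, α.continuous⟩ : C(M, M))) inferInstance
  set ι : (M ≃ᵢ M) → C(M, M) := fun α => ⟨⇑α, α.continuous⟩ with hι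
  have hemb : IsEmbedding ι := by
    refine ⟨⟨rfl⟩, fun a b h => ?_⟩
    refine IsometryEquiv.ext fun x => ?_
    simpa [hι] using congrFun (congrArg DFunLike.coe h) x
  rw [isProperMap_iff_isCompact_preimage]
  have hcont : Continuous fun α : M ≃ᵢ M => α m := by
    have h1 : Continuous ι := continuous_induced_dom
    have h2 : Continuous fun φ : C(M, M) => φ m := continuous_eval_const m
    exact h2.comp h1
  refine ⟨hcont, fun K hK => ?_⟩
  -- reduce to compactness in C(M, M)
  rw [hemb.isCompact_iff]
  -- setup: a radius bounding K, and the "pairs" set B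
  obtain ⟨R, hR⟩ := hK.isBounded.subset_closedBall m
  set B : Set ((M → M) × (M → M)) :=
    (fun α : M ≃ᵢ M => (⇑α, ⇑α.symm)) '' {α | α m ∈ K} with hB
  have hBC : B ⊆ goodSet K m := by
    rintro - ⟨α, hα, rfl⟩
    exact ⟨α.isometry, hα, α.apply_symm_apply, α.symm_apply_apply⟩
  set Q : Set (M → M) := Set.pi univ fun x => closedBall m (dist x m + R) with hQ
  have hBQ : B ⊆ Q ×ˢ Q := by
    rintro - ⟨α, hα, rfl⟩
    have hαm : dist (α m) m ≤ R := mem_closedBall.1 (hR hα)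
    constructor <;> refine mem_univ_pi.2 fun x => mem_closedBall.2 ?_
    · calc dist (α x) m ≤ dist (α x) (α m) + dist (α m) m := dist_triangle _ _ _
        _ ≤ dist x m + R := by rw [α.isometry.dist_eq]; linarith
    · have h1 : dist (α.symm x) m = dist x (α m) := by
        conv_lhs => rw [← α.symm_apply_apply m]
        exact α.symm.isometry.dist_eq _ _
      calc dist (α.symm x) m = dist x (α m) := h1
        _ ≤ dist x m + dist m (α m) := dist_triangle _ _ _
        _ ≤ dist x m + R := by rw [dist_comm m]; linarith
  have hQc : IsCompact (Q ×ˢ Q) :=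
    IsCompact.prod (isCompact_univ_pi fun x => isCompact_closedBall _ _)
      (isCompact_univ_pi fun x => isCompact_closedBall _ _)
  have hclB : IsCompact (closure B) :=
    hQc.of_isClosed_subset isClosed_closure (closure_minimal hBQ hQc.isClosed)
  have hclBC : closure B ⊆ goodSet K m :=
    closure_minimal hBC (isClosed_goodSet hK.isClosed m)
  -- the set of coercions of admissible isometries is the first projection of closure B
  have key : Prod.fst '' closure B
      = (fun α : M ≃ᵢ M => ⇑α) '' {α | α m ∈ K} := by
    apply Subset.antisymm
    · rintro - ⟨⟨f, g⟩, hp, rfl⟩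
      obtain ⟨hiso, hm, h1, h2⟩ := hclBC hp
      exact ⟨⟨⟨f, g, h2, h1⟩, hiso⟩, hm, rfl⟩
    · rintro - ⟨α, hα, rfl⟩
      exact ⟨(⇑α, ⇑α.symm), subset_closure ⟨α, hα, rfl⟩, rfl⟩
  have hA : IsCompact ((fun α : M ≃ᵢ M => ⇑α) '' {α | α m ∈ K}) := by
    rw [← key]; exact hclB.image continuous_fst
  -- Arzelà–Ascoli
  refine ArzelaAscoli.isCompact_of_equicontinuous _ ?_ ?_
  · have : ContinuousMap.toFun '' (ι '' ((fun α : M ≃ᵢ M => α m) ⁻¹' K))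
        = (fun α : M ≃ᵢ M => ⇑α) '' {α | α m ∈ K} := by
      rw [image_image]; rfl
    rwa [this]
  · refine Metric.equicontinuous_of_continuity_modulus id tendsto_id _ fun x y i => ?_
    obtain ⟨φ, hi⟩ := i
    obtain ⟨α, -, rfl⟩ := hi
    simpa [hι] using (α.isometry.dist_eq x y).le
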